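/- For every integer k ≥ 1, the generating function B_k satisfies z^{2s}·B_k(z) = z^{2k}·(1 − z²)·B(z) in ℚ[[z]]; in particular, for k ≥ s, B_k(z) = z^{2k−2s}(1−z²)B(z) and B(z) = ∑_{k≥s} B_k(z). -/

import Mathlib

open scoped Classical

/-- `x` is an endpoint of some pair in `P`. -/
def Paired (P : Finset (ℕ × ℕ)) (x : ℕ) : Prop := ∃ p ∈ P, p.1 = x ∨ p.2 = x

/-- Conditions (i)–(iii): `P` is a set of pairs `(i,j)`, `1 ≤ i < j ≤ n`, each index in at
most one pair, noncrossing, and every hairpin loop has at least `m` unpaired bases. -/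
def SecBase (m n : ℕ) (P : Finset (ℕ × ℕ)) : Prop :=
  (∀ p ∈ P, 1 ≤ p.1 ∧ p.1 < p.2 ∧ p.2 ≤ n) ∧
  (∀ p ∈ P, ∀ q ∈ P, p ≠ q → p.1 ≠ q.1 ∧ p.1 ≠ q.2 ∧ p.2 ≠ q.1 ∧ p.2 ≠ q.2) ∧
  (∀ p ∈ P, ∀ q ∈ P, ¬(p.1 < q.1 ∧ q.1 < p.2 ∧ p.2 < q.2)) ∧
  (∀ p ∈ P, (∀ x, p.1 < x → x < p.2 → ¬Paired P x) → m ≤ p.2 - p.1 - 1)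

/-- Condition (iv): every maximal stack of `P` has length at least `s`. -/
def StackCond (s : ℕ) (P : Finset (ℕ × ℕ)) : Prop :=
  ∀ p ∈ P, (p.1 - 1, p.2 + 1) ∉ P → ∃ t, s ≤ t ∧ ∀ a < t, (p.1 + a, p.2 - a) ∈ P

/-- `P` is a secondary structure of length `n` with minimum stem size `s` and minimum
hairpin size `m`. -/
def IsSecStruct (s m n : ℕ) (P : Finset (ℕ × ℕ)) : Prop :=
  SecBase m n P ∧ StackCond s P

/-- The (finite) set of all secondary structures of length `n`. -/
noncomputable def secFinset (s m n : ℕ) : Finset (Finset (ℕ × ℕ)) :=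
  (Finset.range (n + 1) ×ˢ Finset.range (n + 1)).powerset.filter (IsSecStruct s m n)

/-- `r n`: the number of secondary structures of length `n`. -/
noncomputable def secCount (s m n : ℕ) : ℕ := (secFinset s m n).card

/-- `b n`: the number of secondary structures of length `n` containing the pair `(1, n)`. -/
noncomputable def secCountB (s m n : ℕ) : ℕ :=
  ((secFinset s m n).filter (fun P => (1, n) ∈ P)).card

/-- The generating function `B(z) = ∑ b_n z^n` in `ℚ[[z]]`. -/
noncomputable def Bgf (s m : ℕ) : PowerSeries ℚ :=
  PowerSeries.mk fun n => (secCountB s m n : ℚ)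

/-- `P` satisfies (i)–(iii), contains the pairs `(1,n),…,(k,n+1−k)` but not `(k+1,n−k)`,
and every maximal stack other than the initial one has length at least `s`. -/
def IsBkStruct (s m k n : ℕ) (P : Finset (ℕ × ℕ)) : Prop :=
  SecBase m n P ∧ (∀ a < k, (1 + a, n - a) ∈ P) ∧ (k + 1, n - k) ∉ P ∧
  (∀ p ∈ P, p ≠ (1, n) → (p.1 - 1, p.2 + 1) ∉ P →
    ∃ t, s ≤ t ∧ ∀ a < t, (p.1 + a, p.2 - a) ∈ P)

/-- Generating function `B_k(z) = ∑ b_{k,n} z^n` in `ℚ[[z]]`. -/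
noncomputable def Bkgf (s m k : ℕ) : PowerSeries ℚ :=
  PowerSeries.mk fun n =>
    (((Finset.range (n + 1) ×ˢ Finset.range (n + 1)).powerset.filter
      (IsBkStruct s m k n)).card : ℚ)

/-! ### Substitution `z ↦ z^k`, formal logarithm, truncated infinite sums -/

/-! ### Auxiliary material for the proof -/

namespace Stmt12Aux

lemma pair_eq {a b c d : ℕ} (h1 : a = c) (h2 : b = d) : ((a, b) : ℕ × ℕ) = (c, d) := by
  subst h1; subst h2; rfl

lemma pair_ne {a b c d : ℕ} (h : a ≠ c ∨ b ≠ d) : ((a, b) : ℕ × ℕ) ≠ (c, d) := by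
  intro e
  have e1 : a = c := congrArg Prod.fst e
  have e2 : b = d := congrArg Prod.snd e
  rcases h with h | h <;> exact h ‹_›

/-- The set counted by the coefficients of `Bkgf`. -/
noncomputable def bkSet (s m k n : ℕ) : Finset (Finset (ℕ × ℕ)) :=
  (Finset.range (n + 1) ×ˢ Finset.range (n + 1)).powerset.filter (IsBkStruct s m k n)

lemma coeff_Bkgf (s m k n : ℕ) :
    (PowerSeries.coeff (R := ℚ) n) (Bkgf s m k) = ((bkSet s m k n).card : ℚ) := by
  rw [Bkgf, PowerSeries.coeff_mk, bkSet]

lemma coeff_Bgf (s m n : ℕ) :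
    (PowerSeries.coeff (R := ℚ) n) (Bgf s m) = (secCountB s m n : ℚ) := by
  rw [Bgf, PowerSeries.coeff_mk]

variable {s m k n : ℕ} {P Q : Finset (ℕ × ℕ)}

lemma bk_one_mem (h : IsBkStruct s m k n P) (hk : 1 ≤ k) : (1, n) ∈ P := by
  simpa using h.2.1 0 hk

lemma bk_2k_le (h : IsBkStruct s m k n P) (hk : 1 ≤ k) : 2 * k ≤ n := by
  have hmem := h.2.1 (k - 1) (by omega)
  have hb : 1 ≤ 1 + (k - 1) ∧ 1 + (k - 1) < n - (k - 1) ∧ n - (k - 1) ≤ n := h.1.1 _ hmem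
  omega

lemma bk_ne_bounds (h : IsBkStruct s m k n P) (hk : 1 ≤ k) {p : ℕ × ℕ} (hp : p ∈ P)
    (hne : p ≠ (1, n)) : 2 ≤ p.1 ∧ p.1 < p.2 ∧ p.2 + 1 ≤ n := by
  have h1 := bk_one_mem h hk
  have hb : 1 ≤ p.1 ∧ p.1 < p.2 ∧ p.2 ≤ n := h.1.1 p hp
  have hd : p.1 ≠ 1 ∧ p.1 ≠ n ∧ p.2 ≠ 1 ∧ p.2 ≠ n := h.1.2.1 p hp (1, n) h1 hne
  omega

/-- pairs shifted up by one. -/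
def up (p : ℕ × ℕ) : ℕ × ℕ := (p.1 + 1, p.2 + 1)

/-- remove the outer pair and shift everything down. -/
noncomputable def shD (n : ℕ) (P : Finset (ℕ × ℕ)) : Finset (ℕ × ℕ) :=
  (P.erase (1, n)).image fun p => (p.1 - 1, p.2 - 1)

/-- shift everything up and add an outer pair. -/
noncomputable def shU (n : ℕ) (Q : Finset (ℕ × ℕ)) : Finset (ℕ × ℕ) :=
  insert (1, n) (Q.image up)

lemma mem_shD_of {p : ℕ × ℕ} (hp : p ∈ P) (hne : p ≠ (1, n)) :
    (p.1 - 1, p.2 - 1) ∈ shD n P :=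
  Finset.mem_image_of_mem _ (Finset.mem_erase.2 ⟨hne, hp⟩)

lemma mem_shD (h : IsBkStruct s m k n P) (hk : 1 ≤ k) {x y : ℕ} :
    ((x, y) : ℕ × ℕ) ∈ shD n P ↔ ((x + 1, y + 1) ∈ P ∧ ((x + 1, y + 1) : ℕ × ℕ) ≠ (1, n)) := by
  unfold shD
  simp only [Finset.mem_image, Finset.mem_erase]
  constructor
  · rintro ⟨p, ⟨hne, hp⟩, hpr⟩
    have hb := bk_ne_bounds h hk hp hne
    have h1 : p.1 - 1 = x := congrArg Prod.fst hpr
    have h2 : p.2 - 1 = y := congrArg Prod.snd hpr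
    have heq : ((x + 1, y + 1) : ℕ × ℕ) = p := by
      have := pair_eq (a := x + 1) (b := y + 1) (by omega : x + 1 = p.1) (by omega : y + 1 = p.2)
      exact this
    rw [heq]; exact ⟨hp, hne⟩
  · rintro ⟨hp, hne⟩
    exact ⟨(x + 1, y + 1), ⟨hne, hp⟩, by simp⟩

lemma mem_shU {n x y : ℕ} :
    ((x, y) : ℕ × ℕ) ∈ shU n Q ↔
      (((x, y) : ℕ × ℕ) = (1, n) ∨ (1 ≤ x ∧ 1 ≤ y ∧ (x - 1, y - 1) ∈ Q)) := by
  unfold shU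
  rw [Finset.mem_insert]
  constructor
  · rintro (h | h)
    · exact Or.inl h
    · right
      rw [Finset.mem_image] at h
      obtain ⟨q, hq, hh⟩ := h
      have h1 : q.1 + 1 = x := congrArg Prod.fst hh
      have h2 : q.2 + 1 = y := congrArg Prod.snd hh
      refine ⟨by omega, by omega, ?_⟩
      have heq : ((x - 1, y - 1) : ℕ × ℕ) = q :=
        pair_eq (by omega : x - 1 = q.1) (by omega : y - 1 = q.2)
      rw [heq]; exact hq
  · rintro (h | ⟨h1, h2, hq⟩)
    · exact Or.inl h
    · right
      rw [Finset.mem_image]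
      exact ⟨(x - 1, y - 1), hq, pair_eq (by omega) (by omega)⟩

end Stmt12Aux


namespace Stmt12Aux

variable {s m k n : ℕ} {P Q : Finset (ℕ × ℕ)}

lemma paired_shU {n y : ℕ} (hy : Paired Q y) : Paired (shU n Q) (y + 1) := by
  obtain ⟨q, hq, hor⟩ := hy
  refine ⟨up q, Finset.mem_insert_of_mem (Finset.mem_image_of_mem _ hq), ?_⟩
  rcases hor with h | h
  · exact Or.inl (by simp [up, h])
  · exact Or.inr (by simp [up, h])

lemma shD_isBk (hk : 1 ≤ k) (h : IsBkStruct s m (k + 1) (n + 2) P) :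
    IsBkStruct s m k n (shD (n + 2) P) := by
  have hk1 : 1 ≤ k + 1 := by omega
  have h2k : 2 * (k + 1) ≤ n + 2 := bk_2k_le h hk1
  have hbnd : ∀ r : ℕ × ℕ, r ∈ shD (n + 2) P → 1 ≤ r.1 ∧ r.1 < r.2 ∧ r.2 ≤ n := by
    rintro ⟨x, y⟩ hr
    obtain ⟨hp, hne⟩ := (mem_shD h hk1).1 hr
    have hb : 2 ≤ x + 1 ∧ x + 1 < y + 1 ∧ (y + 1) + 1 ≤ n + 2 := bk_ne_bounds h hk1 hp hne
    exact ⟨by omega, by omega, by omega⟩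
  refine ⟨⟨hbnd, ?_, ?_, ?_⟩, ?_, ?_, ?_⟩
  · -- distinctness
    rintro ⟨x1, y1⟩ hp1 ⟨x2, y2⟩ hp2 hne
    obtain ⟨hq1, hne1⟩ := (mem_shD h hk1).1 hp1
    obtain ⟨hq2, hne2⟩ := (mem_shD h hk1).1 hp2
    have hnum : x1 ≠ x2 ∨ y1 ≠ y2 := by
      by_contra hcon
      push_neg at hcon
      exact hne (pair_eq hcon.1 hcon.2)
    have hne' : ((x1 + 1, y1 + 1) : ℕ × ℕ) ≠ (x2 + 1, y2 + 1) := pair_ne (by omega)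
    have hd : x1 + 1 ≠ x2 + 1 ∧ x1 + 1 ≠ y2 + 1 ∧ y1 + 1 ≠ x2 + 1 ∧ y1 + 1 ≠ y2 + 1 :=
      h.1.2.1 _ hq1 _ hq2 hne'
    exact ⟨by omega, by omega, by omega, by omega⟩
  · -- noncrossing
    rintro ⟨x1, y1⟩ hp1 ⟨x2, y2⟩ hp2
    obtain ⟨hq1, hne1⟩ := (mem_shD h hk1).1 hp1
    obtain ⟨hq2, hne2⟩ := (mem_shD h hk1).1 hp2
    have hd : ¬(x1 + 1 < x2 + 1 ∧ x2 + 1 < y1 + 1 ∧ y1 + 1 < y2 + 1) :=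
      h.1.2.2.1 _ hq1 _ hq2
    intro hcon
    exact hd ⟨by omega, by omega, by omega⟩
  · -- hairpin
    rintro ⟨x, y⟩ hr hx
    obtain ⟨hp, hne⟩ := (mem_shD h hk1).1 hr
    have hb : 2 ≤ x + 1 ∧ x + 1 < y + 1 ∧ (y + 1) + 1 ≤ n + 2 := bk_ne_bounds h hk1 hp hne
    have hx' : ∀ z, x < z → z < y → ¬Paired (shD (n + 2) P) z := hx
    have hres : m ≤ (y + 1) - (x + 1) - 1 := by
      refine h.1.2.2.2 (x + 1, y + 1) hp ?_
      intro z hz1 hz2 hpz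
      obtain ⟨q, hq, hor⟩ := hpz
      have hzb : x + 1 < z ∧ z < y + 1 := ⟨hz1, hz2⟩
      have hqne : q ≠ (1, n + 2) := by
        rintro rfl
        rcases hor with h' | h'
        · have : (1 : ℕ) = z := h'
          omega
        · have : (n + 2 : ℕ) = z := h'
          omega
      have hqmem := mem_shD_of hq hqne
      have hpaired : Paired (shD (n + 2) P) (z - 1) := by
        refine ⟨(q.1 - 1, q.2 - 1), hqmem, ?_⟩
        rcases hor with h' | h'
        · exact Or.inl (by simp only []; omega)
        · exact Or.inr (by simp only []; omega)
      exact hx' (z - 1) (by omega) (by omega) hpaired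
    show m ≤ y - x - 1
    omega
  · -- initial stack
    intro a ha
    rw [mem_shD h hk1]
    have hp := h.2.1 (a + 1) (by omega)
    constructor
    · have heq : ((1 + a + 1, n - a + 1) : ℕ × ℕ) = (1 + (a + 1), n + 2 - (a + 1)) :=
        pair_eq (by omega) (by omega)
      rw [heq]; exact hp
    · exact pair_ne (Or.inl (by omega))
  · -- excluded pair
    rw [mem_shD h hk1]
    rintro ⟨hc, -⟩
    have heq : ((k + 1 + 1, n - k + 1) : ℕ × ℕ) = ((k + 1) + 1, n + 2 - (k + 1)) :=
      pair_eq (by omega) (by omega)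
    rw [heq] at hc
    exact h.2.2.1 hc
  · -- stacks
    rintro ⟨x, y⟩ hr hrne hnot
    obtain ⟨hp, hpne⟩ := (mem_shD h hk1).1 hr
    have hb : 2 ≤ x + 1 ∧ x + 1 < y + 1 ∧ (y + 1) + 1 ≤ n + 2 := bk_ne_bounds h hk1 hp hpne
    have hnot' : ((x - 1, y + 1) : ℕ × ℕ) ∉ shD (n + 2) P := hnot
    have hnotP : ((x, y + 2) : ℕ × ℕ) ∉ P := by
      intro hmm
      by_cases hx1 : x = 1
      · subst hx1
        have hone := bk_one_mem h hk1
        by_cases he : ((1, y + 2) : ℕ × ℕ) = (1, n + 2)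
        · have : y + 2 = n + 2 := congrArg Prod.snd he
          exact hrne (pair_eq rfl (by omega))
        · have hd : (1 : ℕ) ≠ 1 ∧ (1 : ℕ) ≠ n + 2 ∧ y + 2 ≠ 1 ∧ y + 2 ≠ n + 2 :=
            h.1.2.1 _ hmm _ hone he
          exact hd.1 rfl
      · apply hnot'
        rw [mem_shD h hk1]
        constructor
        · have heq : ((x - 1 + 1, y + 1 + 1) : ℕ × ℕ) = (x, y + 2) := pair_eq (by omega) (by omega)
          rw [heq]; exact hmm
        · exact pair_ne (Or.inl (by omega))
    have hst := h.2.2.2 (x + 1, y + 1) hp hpne (by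
      show ((x + 1 - 1, y + 1 + 1) : ℕ × ℕ) ∉ P
      have heq : ((x + 1 - 1, y + 1 + 1) : ℕ × ℕ) = (x, y + 2) := pair_eq (by omega) rfl
      rw [heq]; exact hnotP)
    obtain ⟨t, hts, hstk⟩ := hst
    refine ⟨t, hts, ?_⟩
    intro a ha
    have hmem := hstk a ha
    have hmem' : ((x + 1 + a, y + 1 - a) : ℕ × ℕ) ∈ P := hmem
    have hbb : 1 ≤ x + 1 + a ∧ x + 1 + a < y + 1 - a ∧ y + 1 - a ≤ n + 2 := h.1.1 _ hmem'
    show ((x + a, y - a) : ℕ × ℕ) ∈ shD (n + 2) P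
    rw [mem_shD h hk1]
    constructor
    · have heq : ((x + a + 1, y - a + 1) : ℕ × ℕ) = (x + 1 + a, y + 1 - a) :=
        pair_eq (by omega) (by omega)
      rw [heq]; exact hmem'
    · exact pair_ne (Or.inl (by omega))

end Stmt12Aux


namespace Stmt12Aux

variable {s m k n : ℕ} {P Q : Finset (ℕ × ℕ)}

lemma shU_isBk (hk : 1 ≤ k) (h : IsBkStruct s m k n Q) :
    IsBkStruct s m (k + 1) (n + 2) (shU (n + 2) Q) := by
  have h2k : 2 * k ≤ n := bk_2k_le h hk
  have hbQ : ∀ q ∈ Q, 1 ≤ q.1 ∧ q.1 < q.2 ∧ q.2 ≤ n := h.1.1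
  have honeQ : (1, n) ∈ Q := bk_one_mem h hk
  have hbnd : ∀ r : ℕ × ℕ, r ∈ shU (n + 2) Q → 1 ≤ r.1 ∧ r.1 < r.2 ∧ r.2 ≤ n + 2 := by
    rintro ⟨x, y⟩ hr
    rcases mem_shU.1 hr with he | ⟨h1, h2, hq⟩
    · have e1 : x = 1 := congrArg Prod.fst he
      have e2 : y = n + 2 := congrArg Prod.snd he
      exact ⟨by omega, by omega, by omega⟩
    · have hb : 1 ≤ x - 1 ∧ x - 1 < y - 1 ∧ y - 1 ≤ n := hbQ _ hq
      exact ⟨by omega, by omega, by omega⟩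
  refine ⟨⟨hbnd, ?_, ?_, ?_⟩, ?_, ?_, ?_⟩
  · -- distinctness
    rintro ⟨x1, y1⟩ hp1 ⟨x2, y2⟩ hp2 hne
    have hnum : x1 ≠ x2 ∨ y1 ≠ y2 := by
      by_contra hcon; push_neg at hcon; exact hne (pair_eq hcon.1 hcon.2)
    rcases mem_shU.1 hp1 with he1 | ⟨ha1, hb1, hq1⟩ <;>
      rcases mem_shU.1 hp2 with he2 | ⟨ha2, hb2, hq2⟩
    · exact absurd (he1.trans he2.symm) hne
    · have e1 : x1 = 1 := congrArg Prod.fst he1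
      have e2 : y1 = n + 2 := congrArg Prod.snd he1
      have hb : 1 ≤ x2 - 1 ∧ x2 - 1 < y2 - 1 ∧ y2 - 1 ≤ n := hbQ _ hq2
      exact ⟨by omega, by omega, by omega, by omega⟩
    · have e1 : x2 = 1 := congrArg Prod.fst he2
      have e2 : y2 = n + 2 := congrArg Prod.snd he2
      have hb : 1 ≤ x1 - 1 ∧ x1 - 1 < y1 - 1 ∧ y1 - 1 ≤ n := hbQ _ hq1
      exact ⟨by omega, by omega, by omega, by omega⟩
    · have hb1' : 1 ≤ x1 - 1 ∧ x1 - 1 < y1 - 1 ∧ y1 - 1 ≤ n := hbQ _ hq1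
      have hb2' : 1 ≤ x2 - 1 ∧ x2 - 1 < y2 - 1 ∧ y2 - 1 ≤ n := hbQ _ hq2
      have hqq : ((x1 - 1, y1 - 1) : ℕ × ℕ) ≠ (x2 - 1, y2 - 1) := pair_ne (by omega)
      have hd : x1 - 1 ≠ x2 - 1 ∧ x1 - 1 ≠ y2 - 1 ∧ y1 - 1 ≠ x2 - 1 ∧ y1 - 1 ≠ y2 - 1 :=
        h.1.2.1 _ hq1 _ hq2 hqq
      exact ⟨by omega, by omega, by omega, by omega⟩
  · -- noncrossing
    rintro ⟨x1, y1⟩ hp1 ⟨x2, y2⟩ hp2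
    rcases mem_shU.1 hp1 with he1 | ⟨ha1, hb1, hq1⟩ <;>
      rcases mem_shU.1 hp2 with he2 | ⟨ha2, hb2, hq2⟩
    · have e1 : x1 = 1 := congrArg Prod.fst he1
      have e2 : y1 = n + 2 := congrArg Prod.snd he1
      have e3 : x2 = 1 := congrArg Prod.fst he2
      intro hcon; omega
    · have e1 : x1 = 1 := congrArg Prod.fst he1
      have e2 : y1 = n + 2 := congrArg Prod.snd he1
      have hb : 1 ≤ x2 - 1 ∧ x2 - 1 < y2 - 1 ∧ y2 - 1 ≤ n := hbQ _ hq2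
      intro hcon; omega
    · have e1 : x2 = 1 := congrArg Prod.fst he2
      have hb : 1 ≤ x1 - 1 ∧ x1 - 1 < y1 - 1 ∧ y1 - 1 ≤ n := hbQ _ hq1
      intro hcon; omega
    · have hb1' : 1 ≤ x1 - 1 ∧ x1 - 1 < y1 - 1 ∧ y1 - 1 ≤ n := hbQ _ hq1
      have hb2' : 1 ≤ x2 - 1 ∧ x2 - 1 < y2 - 1 ∧ y2 - 1 ≤ n := hbQ _ hq2
      have hd : ¬(x1 - 1 < x2 - 1 ∧ x2 - 1 < y1 - 1 ∧ y1 - 1 < y2 - 1) :=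
        h.1.2.2.1 _ hq1 _ hq2
      intro hcon; omega
  · -- hairpin
    rintro ⟨x, y⟩ hr hx
    have hx' : ∀ z, x < z → z < y → ¬Paired (shU (n + 2) Q) z := hx
    rcases mem_shU.1 hr with he | ⟨h1, h2, hq⟩
    · exfalso
      have e1 : x = 1 := congrArg Prod.fst he
      have e2 : y = n + 2 := congrArg Prod.snd he
      have hn2 : 2 ≤ n := by omega
      have hmem2 : ((2, n + 1) : ℕ × ℕ) ∈ shU (n + 2) Q := by
        rw [mem_shU]
        exact Or.inr ⟨by omega, by omega, by
          have heq : ((2 - 1, n + 1 - 1) : ℕ × ℕ) = (1, n) := pair_eq rfl (by omega)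
          rw [heq]; exact honeQ⟩
      exact hx' 2 (by omega) (by omega) ⟨(2, n + 1), hmem2, Or.inl rfl⟩
    · have hb : 1 ≤ x - 1 ∧ x - 1 < y - 1 ∧ y - 1 ≤ n := hbQ _ hq
      have hres : m ≤ (y - 1) - (x - 1) - 1 := by
        refine h.1.2.2.2 (x - 1, y - 1) hq ?_
        intro w hw1 hw2 hpw
        have hP : Paired (shU (n + 2) Q) (w + 1) := paired_shU hpw
        exact hx' (w + 1) (by omega) (by omega) hP
      show m ≤ y - x - 1
      omega
  · -- initial stack
    intro a ha
    rcases Nat.eq_zero_or_pos a with rfl | hapos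
    · show ((1 + 0, n + 2 - 0) : ℕ × ℕ) ∈ shU (n + 2) Q
      have heq : ((1 + 0, n + 2 - 0) : ℕ × ℕ) = (1, n + 2) := pair_eq (by omega) (by omega)
      rw [heq]
      exact Finset.mem_insert_self _ _
    · rw [mem_shU]
      right
      refine ⟨by omega, by omega, ?_⟩
      have hp := h.2.1 (a - 1) (by omega)
      have heq : ((1 + a - 1, n + 2 - a - 1) : ℕ × ℕ) = (1 + (a - 1), n - (a - 1)) :=
        pair_eq (by omega) (by omega)
      rw [heq]; exact hp
  · -- excluded pair
    rw [mem_shU]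
    rintro (he | ⟨h1, h2, hqq⟩)
    · have : k + 1 + 1 = 1 := congrArg Prod.fst he
      omega
    · apply h.2.2.1
      have heq : ((k + 1 + 1 - 1, n + 2 - (k + 1) - 1) : ℕ × ℕ) = (k + 1, n - k) :=
        pair_eq (by omega) (by omega)
      rw [heq] at hqq; exact hqq
  · -- stacks
    rintro ⟨x, y⟩ hr hne hnot
    have hnot' : ((x - 1, y + 1) : ℕ × ℕ) ∉ shU (n + 2) Q := hnot
    rcases mem_shU.1 hr with he | ⟨h1, h2, hq⟩
    · exact absurd he hne
    have hb : 1 ≤ x - 1 ∧ x - 1 < y - 1 ∧ y - 1 ≤ n := hbQ _ hq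
    by_cases hq1 : ((x - 1, y - 1) : ℕ × ℕ) = (1, n)
    · exfalso
      have e1 : x - 1 = 1 := congrArg Prod.fst hq1
      have e2 : y - 1 = n := congrArg Prod.snd hq1
      apply hnot'
      have heq : ((x - 1, y + 1) : ℕ × ℕ) = (1, n + 2) := pair_eq (by omega) (by omega)
      rw [heq]
      exact Finset.mem_insert_self _ _
    · have hQnot : ((x - 1 - 1, y - 1 + 1) : ℕ × ℕ) ∉ Q := by
        intro hqq
        apply hnot'
        rw [mem_shU]
        right
        refine ⟨by omega, by omega, ?_⟩
        have heq : ((x - 1 - 1, y + 1 - 1) : ℕ × ℕ) = (x - 1 - 1, y - 1 + 1) :=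
          pair_eq rfl (by omega)
        rw [heq]; exact hqq
      have hst := h.2.2.2 (x - 1, y - 1) hq hq1 hQnot
      obtain ⟨t, hts, hstk⟩ := hst
      refine ⟨t, hts, ?_⟩
      intro a ha
      have hmem : ((x - 1 + a, y - 1 - a) : ℕ × ℕ) ∈ Q := hstk a ha
      have hbb : 1 ≤ x - 1 + a ∧ x - 1 + a < y - 1 - a ∧ y - 1 - a ≤ n := hbQ _ hmem
      show ((x + a, y - a) : ℕ × ℕ) ∈ shU (n + 2) Q
      rw [mem_shU]
      right
      refine ⟨by omega, by omega, ?_⟩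
      have heq : ((x + a - 1, y - a - 1) : ℕ × ℕ) = (x - 1 + a, y - 1 - a) :=
        pair_eq (by omega) (by omega)
      rw [heq]; exact hmem

end Stmt12Aux


namespace Stmt12Aux

variable {s m k n : ℕ} {P Q : Finset (ℕ × ℕ)}

lemma card_bk_succ (s m k n : ℕ) (hk : 1 ≤ k) :
    (bkSet s m (k + 1) (n + 2)).card = (bkSet s m k n).card := by
  refine Finset.card_bij' (fun P _ => shD (n + 2) P) (fun Q _ => shU (n + 2) Q) ?_ ?_ ?_ ?_
  · intro P hP
    rw [bkSet, Finset.mem_filter, Finset.mem_powerset] at hP ⊢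
    have hbk := shD_isBk hk hP.2
    refine ⟨?_, hbk⟩
    intro r hr
    have hb := hbk.1.1 r hr
    rcases r with ⟨x, y⟩
    have hb' : 1 ≤ x ∧ x < y ∧ y ≤ n := hb
    simp only [Finset.mem_product, Finset.mem_range]
    exact ⟨by omega, by omega⟩
  · intro Q hQ
    rw [bkSet, Finset.mem_filter, Finset.mem_powerset] at hQ ⊢
    have hbk := shU_isBk hk hQ.2
    refine ⟨?_, hbk⟩
    intro r hr
    have hb := hbk.1.1 r hr
    rcases r with ⟨x, y⟩
    have hb' : 1 ≤ x ∧ x < y ∧ y ≤ n + 2 := hb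
    simp only [Finset.mem_product, Finset.mem_range]
    exact ⟨by omega, by omega⟩
  · intro P hP
    rw [bkSet, Finset.mem_filter] at hP
    have h := hP.2
    have hone : (1, n + 2) ∈ P := bk_one_mem h (by omega)
    show shU (n + 2) (shD (n + 2) P) = P
    unfold shU shD
    rw [Finset.image_image]
    have himg : (P.erase (1, n + 2)).image (up ∘ fun p => (p.1 - 1, p.2 - 1))
        = (P.erase (1, n + 2)).image id := by
      apply Finset.image_congr
      intro p hp
      rw [Finset.mem_coe, Finset.mem_erase] at hp
      have hb := bk_ne_bounds h (by omega) hp.2 hp.1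
      show ((p.1 - 1 + 1, p.2 - 1 + 1) : ℕ × ℕ) = p
      exact pair_eq (by omega : p.1 - 1 + 1 = p.1) (by omega : p.2 - 1 + 1 = p.2)
    rw [himg, Finset.image_id, Finset.insert_erase hone]
  · intro Q hQ
    rw [bkSet, Finset.mem_filter] at hQ
    have h := hQ.2
    have hup := shU_isBk hk h
    show shD (n + 2) (shU (n + 2) Q) = Q
    ext r
    rcases r with ⟨x, y⟩
    rw [mem_shD hup (by omega)]
    constructor
    · rintro ⟨hmem, hne⟩
      rcases mem_shU.1 hmem with he | ⟨h1, h2, hq⟩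
      · exact absurd he hne
      · have heq : ((x + 1 - 1, y + 1 - 1) : ℕ × ℕ) = (x, y) := pair_eq (by omega) (by omega)
        rw [heq] at hq; exact hq
    · intro hq
      have hb : 1 ≤ x ∧ x < y ∧ y ≤ n := h.1.1 _ hq
      constructor
      · rw [mem_shU]
        right
        refine ⟨by omega, by omega, ?_⟩
        have heq : ((x + 1 - 1, y + 1 - 1) : ℕ × ℕ) = (x, y) := pair_eq (by omega) (by omega)
        rw [heq]; exact hq
      · exact pair_ne (Or.inr (by omega))

lemma bkSet_eq_empty (s m k n : ℕ) (hk : 1 ≤ k) (hn : n < 2 * k) :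
    bkSet s m k n = ∅ := by
  rw [Finset.eq_empty_iff_forall_notMem]
  intro P hP
  rw [bkSet, Finset.mem_filter] at hP
  have := bk_2k_le hP.2 hk
  omega

lemma partition (s m n : ℕ) (hs : 1 ≤ s) :
    secCountB s m n = ∑ k ∈ Finset.Icc s n, (bkSet s m k n).card := by
  have hdisj : ∀ k ∈ Finset.Icc s n, ∀ k' ∈ Finset.Icc s n, k ≠ k' →
      Disjoint (bkSet s m k n) (bkSet s m k' n) := by
    intro k _ k' _ hne
    rw [Finset.disjoint_left]
    intro P hP hP'
    rw [bkSet, Finset.mem_filter] at hP hP'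
    have h1 := hP.2
    have h2 := hP'.2
    rcases Nat.lt_or_ge k k' with hlt | hge
    · apply h1.2.2.1
      have hmm := h2.2.1 k hlt
      have heq : ((1 + k, n - k) : ℕ × ℕ) = (k + 1, n - k) := pair_eq (by omega) rfl
      rw [heq] at hmm; exact hmm
    · have hlt : k' < k := by omega
      apply h2.2.2.1
      have hmm := h1.2.1 k' hlt
      have heq : ((1 + k', n - k') : ℕ × ℕ) = (k' + 1, n - k') := pair_eq (by omega) rfl
      rw [heq] at hmm; exact hmm
  rw [secCountB, ← Finset.card_biUnion hdisj]
  congr 1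
  ext P
  simp only [Finset.mem_biUnion, Finset.mem_filter, Finset.mem_Icc, secFinset, bkSet,
    Finset.mem_powerset]
  constructor
  · rintro ⟨⟨hsub, hbase, hstack⟩, hone⟩
    have hb0 : ((0, n + 1) : ℕ × ℕ) ∉ P := by
      intro hc
      have hb : 1 ≤ (0 : ℕ) ∧ (0 : ℕ) < n + 1 ∧ n + 1 ≤ n := hbase.1 _ hc
      omega
    obtain ⟨t, hts, hstk⟩ := hstack (1, n) hone hb0
    have hstk' : ∀ a < t, ((1 + a, n - a) : ℕ × ℕ) ∈ P := hstk
    have htn : t ≤ n := by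
      have hb : 1 ≤ 1 + (t - 1) ∧ 1 + (t - 1) < n - (t - 1) ∧ n - (t - 1) ≤ n :=
        hbase.1 _ (hstk' (t - 1) (by omega))
      omega
    set pred := fun u : ℕ => ∀ a < u, ((1 + a, n - a) : ℕ × ℕ) ∈ P with hpred
    set k := Nat.findGreatest pred n with hkdef
    have hpk : pred k := Nat.findGreatest_spec (Nat.zero_le n)
      (fun a ha => absurd ha (Nat.not_lt_zero a))
    have hkt : t ≤ k := Nat.le_findGreatest htn (fun a ha => hstk' a ha)
    have hkn : k ≤ n := Nat.findGreatest_le n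
    have hnotk : ((k + 1, n - k) : ℕ × ℕ) ∉ P := by
      intro hc
      have hck : k + 1 ≤ n := by
        have hb : 1 ≤ k + 1 ∧ k + 1 < n - k ∧ n - k ≤ n := hbase.1 _ hc
        omega
      have hpk1 : pred (k + 1) := by
        intro a ha
        rcases Nat.lt_succ_iff_lt_or_eq.1 ha with h' | h'
        · exact hpk a h'
        · have heq : ((1 + a, n - a) : ℕ × ℕ) = (k + 1, n - k) := pair_eq (by omega) (by omega)
          rw [heq]; exact hc
      exact Nat.findGreatest_is_greatest (by omega) hck hpk1
    exact ⟨k, ⟨by omega, hkn⟩, hsub, hbase, hpk, hnotk, fun p hp _ h' => hstack p hp h'⟩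
  · rintro ⟨k, ⟨hsk, hkn⟩, hsub, hbk⟩
    refine ⟨⟨hsub, hbk.1, ?_⟩, bk_one_mem hbk (by omega)⟩
    intro p hp hnot
    by_cases hpe : p = ((1, n) : ℕ × ℕ)
    · subst hpe
      exact ⟨k, by omega, fun a ha => hbk.2.1 a ha⟩
    · exact hbk.2.2.2 p hp hpe hnot

end Stmt12Aux


namespace Stmt12Aux

lemma Bkgf_succ (s m k : ℕ) (hk : 1 ≤ k) :
    Bkgf s m (k + 1) = PowerSeries.X ^ 2 * Bkgf s m k := by
  apply PowerSeries.ext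
  intro n
  rw [PowerSeries.coeff_X_pow_mul', coeff_Bkgf]
  by_cases hn : 2 ≤ n
  · rw [if_pos hn, coeff_Bkgf]
    obtain ⟨n', rfl⟩ : ∃ n', n = n' + 2 := ⟨n - 2, by omega⟩
    rw [show n' + 2 - 2 = n' from by omega, card_bk_succ s m k n' hk]
  · rw [if_neg hn, bkSet_eq_empty s m (k + 1) n (by omega) (by omega)]
    simp

lemma Bkgf_eq (s m k : ℕ) (hk : 1 ≤ k) :
    Bkgf s m k = PowerSeries.X ^ (2 * (k - 1)) * Bkgf s m 1 := by
  induction k, hk using Nat.le_induction with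
  | base => norm_num
  | succ k hk ih =>
    rw [Bkgf_succ s m k hk, ih, ← mul_assoc, ← pow_add]
    have he : 2 + 2 * (k - 1) = 2 * (k + 1 - 1) := by omega
    rw [he]

lemma secCountB_cast (s m : ℕ) (hs : 1 ≤ s) {n M : ℕ} (h : n ≤ M) :
    (secCountB s m n : ℚ) = ∑ k ∈ Finset.Icc s M, ((bkSet s m k n).card : ℚ) := by
  rw [partition s m n hs, Nat.cast_sum]
  apply Finset.sum_subset
  · exact Finset.Icc_subset_Icc_right h
  · intro k hk hnk
    rw [Finset.mem_Icc] at hk hnk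
    rw [bkSet_eq_empty s m k n (by omega) (by omega)]
    simp

lemma key (s m : ℕ) (hs : 1 ≤ s) :
    (1 - PowerSeries.X ^ 2) * Bgf s m = Bkgf s m s := by
  apply PowerSeries.ext
  intro n
  rw [sub_mul, one_mul, map_sub, coeff_Bgf, coeff_Bkgf]
  set M := n + s + 2 with hM
  have hS1 : (secCountB s m n : ℚ) = ∑ k ∈ Finset.Icc s M, ((bkSet s m k n).card : ℚ) :=
    secCountB_cast s m hs (by omega)
  have hS2 : (PowerSeries.coeff (R := ℚ) n) (PowerSeries.X ^ 2 * Bgf s m)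
      = ∑ k ∈ Finset.Icc s M, ((bkSet s m (k + 1) n).card : ℚ) := by
    rw [PowerSeries.coeff_X_pow_mul']
    by_cases hn : 2 ≤ n
    · rw [if_pos hn, coeff_Bgf, secCountB_cast s m hs (show n - 2 ≤ M by omega)]
      apply Finset.sum_congr rfl
      intro k hk
      rw [Finset.mem_Icc] at hk
      have hc := card_bk_succ s m k (n - 2) (by omega)
      rw [show n - 2 + 2 = n from by omega] at hc
      rw [hc]
    · rw [if_neg hn]
      symm
      apply Finset.sum_eq_zero
      intro k hk
      rw [bkSet_eq_empty s m (k + 1) n (by omega) (by omega)]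
      simp
  have himg : Finset.Icc (s + 1) (M + 1) = (Finset.Icc s M).image (· + 1) := by
    ext x
    simp only [Finset.mem_image, Finset.mem_Icc]
    constructor
    · intro hx; exact ⟨x - 1, by omega, by omega⟩
    · rintro ⟨y, hy, rfl⟩; omega
  have hS3 : ∑ k ∈ Finset.Icc s M, ((bkSet s m (k + 1) n).card : ℚ)
      = ∑ k ∈ Finset.Icc (s + 1) (M + 1), ((bkSet s m k n).card : ℚ) := by
    rw [himg, Finset.sum_image (fun a _ b _ h => by omega)]
  have htop : ∑ k ∈ Finset.Icc (s + 1) (M + 1), ((bkSet s m k n).card : ℚ)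
      = ∑ k ∈ Finset.Icc (s + 1) M, ((bkSet s m k n).card : ℚ) := by
    symm
    apply Finset.sum_subset
    · exact Finset.Icc_subset_Icc_right (by omega)
    · intro k hk hnk
      rw [Finset.mem_Icc] at hk hnk
      rw [bkSet_eq_empty s m k n (by omega) (by omega)]
      simp
  have hsplit : Finset.Icc s M = insert s (Finset.Icc (s + 1) M) := by
    ext x
    simp only [Finset.mem_insert, Finset.mem_Icc]
    omega
  rw [hS1, hS2, hS3, htop, hsplit,
    Finset.sum_insert (by rw [Finset.mem_Icc]; omega)]
  ring

end Stmt12Aux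

theorem stmt12 (s m : ℕ) (hs : 1 ≤ s) (hm : 1 ≤ m) :
    (∀ k : ℕ, 1 ≤ k →
      PowerSeries.X ^ (2 * s) * Bkgf s m k
        = PowerSeries.X ^ (2 * k) * (1 - PowerSeries.X ^ 2) * Bgf s m) ∧
    (∀ k : ℕ, s ≤ k →
      Bkgf s m k
        = PowerSeries.X ^ (2 * k - 2 * s) * (1 - PowerSeries.X ^ 2) * Bgf s m) ∧
    Bgf s m = PowerSeries.mk
      (fun n => ∑ k ∈ Finset.Icc s n, PowerSeries.coeff (R := ℚ) n (Bkgf s m k)) := by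
  classical
  have hkey : (1 - PowerSeries.X ^ 2) * Bgf s m = Bkgf s m s := Stmt12Aux.key s m hs
  refine ⟨?_, ?_, ?_⟩
  · intro k hk
    rw [Stmt12Aux.Bkgf_eq s m k hk, mul_assoc, hkey, Stmt12Aux.Bkgf_eq s m s hs,
      ← mul_assoc, ← mul_assoc, ← pow_add, ← pow_add]
    have he : 2 * s + 2 * (k - 1) = 2 * k + 2 * (s - 1) := by omega
    rw [he]
  · intro k hk
    rw [Stmt12Aux.Bkgf_eq s m k (hs.trans hk), mul_assoc, hkey, Stmt12Aux.Bkgf_eq s m s hs,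
      ← mul_assoc, ← pow_add]
    have he : 2 * (k - 1) = 2 * k - 2 * s + 2 * (s - 1) := by omega
    rw [he]
  · apply PowerSeries.ext
    intro n
    rw [Stmt12Aux.coeff_Bgf, PowerSeries.coeff_mk, Stmt12Aux.partition s m n hs, Nat.cast_sum]
    exact Finset.sum_congr rfl fun k _ => (Stmt12Aux.coeff_Bkgf s m k n).symm
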